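/- The candidate branch datum (S², S², 2k, 3; ⟦2,…,2⟧, ⟦2,…,2⟧, ⟦s, 2k−s⟧) with 0 < s < 2k and s ≠ k is not realizable: there exist no permutations θ₁, θ₂, θ₃ in S_{2k} with θ₁ and θ₂ fixed-point-free involutions, θ₃ having exactly two cycles of lengths s and 2k−s, θ₁θ₂θ₃ = id, and ⟨θ₁, θ₂, θ₃⟩ acting transitively on {1,…,2k}. -/

import Mathlib

/-- The orbit (cycle) of a point under the cyclic group generated by a permutation. -/
def permOrbit {α : Type*} (f : Equiv.Perm α) (x : α) : Set α :=
  {y | ∃ n : ℤ, (f ^ n) x = y}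

lemma permOrbit_self {α : Type*} (f : Equiv.Perm α) (x : α) : x ∈ permOrbit f x := ⟨0, rfl⟩

lemma permOrbit_apply_mem {α : Type*} (f : Equiv.Perm α) (x : α) : f x ∈ permOrbit f x :=
  ⟨1, by simp⟩

lemma permOrbit_eq_of_mem {α : Type*} {f : Equiv.Perm α} {x w : α} (h : w ∈ permOrbit f x) :
    permOrbit f w = permOrbit f x := by
  obtain ⟨m, hm⟩ := h
  ext y
  constructor
  · rintro ⟨n, hn⟩
    exact ⟨n + m, by rw [zpow_add, Equiv.Perm.mul_apply, hm, hn]⟩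
  · rintro ⟨n, hn⟩
    refine ⟨n - m, ?_⟩
    have hx : (f ^ (-m)) w = x := by rw [← hm, zpow_neg]; exact Equiv.symm_apply_apply _ _
    rw [sub_eq_add_neg, zpow_add, Equiv.Perm.mul_apply, hx, hn]

lemma permOrbit_conj {α : Type*} {f g : Equiv.Perm α} (h : g * f * g⁻¹ = f⁻¹) (x : α) :
    permOrbit f (g x) = g '' permOrbit f x := by
  have key : ∀ n : ℤ, f ^ n * g = g * f ^ (-n) := by
    intro n
    have h1 : g * f ^ (-n) * g⁻¹ = (g * f * g⁻¹) ^ (-n) := (conj_zpow).symm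
    rw [h, inv_zpow, ← zpow_neg, neg_neg] at h1
    rw [← h1]
    group
  ext y
  constructor
  · rintro ⟨n, hn⟩
    refine ⟨(f ^ (-n)) x, ⟨-n, rfl⟩, ?_⟩
    rw [← Equiv.Perm.mul_apply, ← key, Equiv.Perm.mul_apply, hn]
  · rintro ⟨w, ⟨n, hn⟩, hw⟩
    refine ⟨-n, ?_⟩
    rw [← Equiv.Perm.mul_apply, key, neg_neg, Equiv.Perm.mul_apply, hn, hw]

/-- The candidate branch datum `(S², S², 2k, 3; ⟦2,…,2⟧, ⟦2,…,2⟧, ⟦s, 2k-s⟧)` with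
`0 < s < 2k`, `s ≠ k` is not realizable: no monodromy representation exists. -/
theorem stmt4 (k s : ℕ) (hk : 1 ≤ k) (hs0 : 0 < s) (hs1 : s < 2 * k) (hsk : s ≠ k) :
    ¬ ∃ θ₁ θ₂ θ₃ : Equiv.Perm (Fin (2 * k)),
      (θ₁ * θ₁ = 1 ∧ ∀ x, θ₁ x ≠ x) ∧
      (θ₂ * θ₂ = 1 ∧ ∀ x, θ₂ x ≠ x) ∧
      (∃ x y : Fin (2 * k), permOrbit θ₃ x ≠ permOrbit θ₃ y ∧
        (permOrbit θ₃ x).ncard = s ∧ (permOrbit θ₃ y).ncard = 2 * k - s ∧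
        ∀ z, z ∈ permOrbit θ₃ x ∨ z ∈ permOrbit θ₃ y) ∧
      θ₁ * θ₂ * θ₃ = 1 ∧
      (∀ x y : Fin (2 * k), ∃ g ∈ Subgroup.closure ({θ₁, θ₂, θ₃} : Set (Equiv.Perm (Fin (2 * k)))),
        g x = y) := by
  rintro ⟨θ₁, θ₂, θ₃, ⟨h1sq, -⟩, ⟨h2sq, -⟩, ⟨x, y, hxy, hcx, hcy, htot⟩, hprod, htrans⟩
  have h1inv : θ₁⁻¹ = θ₁ := by
    rw [inv_eq_iff_mul_eq_one, h1sq]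
  have h2inv : θ₂⁻¹ = θ₂ := by
    rw [inv_eq_iff_mul_eq_one, h2sq]
  have hθ3 : θ₃ = θ₂ * θ₁ := by
    have : θ₃ = (θ₁ * θ₂)⁻¹ := (inv_eq_of_mul_eq_one_right hprod).symm
    rw [this, mul_inv_rev, h1inv, h2inv]
  have hconj1 : θ₁ * θ₃ * θ₁⁻¹ = θ₃⁻¹ := by
    rw [hθ3, h1inv, mul_inv_rev, h1inv, h2inv]
    calc θ₁ * (θ₂ * θ₁) * θ₁ = θ₁ * θ₂ * (θ₁ * θ₁) := by group
    _ = θ₁ * θ₂ := by rw [h1sq, mul_one]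
  have hconj2 : θ₂ * θ₃ * θ₂⁻¹ = θ₃⁻¹ := by
    rw [hθ3, h2inv, mul_inv_rev, h1inv, h2inv]
    calc θ₂ * (θ₂ * θ₁) * θ₂ = (θ₂ * θ₂) * (θ₁ * θ₂) := by group
    _ = θ₁ * θ₂ := by rw [h2sq, one_mul]
  set A := permOrbit θ₃ x with hA
  set B := permOrbit θ₃ y with hB
  have hne : s ≠ 2 * k - s := by omega
  -- any conjugating-involution preserves A
  have hpres : ∀ (g : Equiv.Perm (Fin (2 * k))), g * θ₃ * g⁻¹ = θ₃⁻¹ →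
      ∀ z, z ∈ A → g z ∈ A := by
    intro g hg z hz
    rcases htot (g z) with h | h
    · exact h
    · exfalso
      have hzA : permOrbit θ₃ z = A := permOrbit_eq_of_mem hz
      have h1 : permOrbit θ₃ (g z) = g '' permOrbit θ₃ z := permOrbit_conj hg z
      have h2 : permOrbit θ₃ (g z) = B := permOrbit_eq_of_mem h
      have hcard : (permOrbit θ₃ (g z)).ncard = s := by
        rw [h1, hzA, Set.ncard_image_of_injective _ g.injective, hcx]
      rw [h2, hcy] at hcard
      exact hne hcard.symm
  have hAiff : ∀ g ∈ Subgroup.closure ({θ₁, θ₂, θ₃} : Set (Equiv.Perm (Fin (2 * k)))),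
      ∀ z, z ∈ A ↔ g z ∈ A := by
    intro g hg
    induction hg using Subgroup.closure_induction with
    | mem g hg =>
      rcases hg with rfl | rfl | rfl
      · intro z
        constructor
        · exact hpres _ hconj1 z
        · intro hz
          have := hpres _ hconj1 _ hz
          rwa [← Equiv.Perm.mul_apply, h1sq, Equiv.Perm.one_apply] at this
      · intro z
        constructor
        · exact hpres _ hconj2 z
        · intro hz
          have := hpres _ hconj2 _ hz
          rwa [← Equiv.Perm.mul_apply, h2sq, Equiv.Perm.one_apply] at this
      · intro z
        constructor
        · intro hz
          have hm : g z ∈ permOrbit g z := permOrbit_apply_mem g z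
          rwa [permOrbit_eq_of_mem hz] at hm
        · intro hz
          have hm : z ∈ permOrbit g (g z) := ⟨-1, by simp⟩
          rwa [permOrbit_eq_of_mem hz] at hm
    | one => simp
    | mul a b ha hb iha ihb =>
      intro z
      rw [Equiv.Perm.mul_apply, ← iha (b z)]
      exact ihb z
    | inv a ha iha =>
      intro z
      rw [iha (a⁻¹ z), ← Equiv.Perm.mul_apply, mul_inv_cancel, Equiv.Perm.one_apply]
  obtain ⟨g, hg, hgxy⟩ := htrans x y
  have hyA : y ∈ A := by
    rw [← hgxy]
    exact ((hAiff g hg x).mp (permOrbit_self θ₃ x))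
  exact hxy ((permOrbit_eq_of_mem hyA).symm)
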